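/- For all κ, λ > 0: 1/γ ≤ (1/φ_κ^λ)·(1 + max((κ + φ_κ^λ)/γ_R, (λ + φ_κ^λ)/γ_{X∖R})). -/

import Mathlib

open Finset

noncomputable section

/-- Irreducibility of a finite nonnegative matrix: any state reaches any other. -/
def Irred {n : Type*} [Fintype n] [DecidableEq n] (P : Matrix n n ℝ) : Prop :=
  ∀ x y, ∃ k : ℕ, 0 < (P ^ k) x y

/-- The restricted ensemble `μ_R(x) = μ(x)/μ(R)` (as a function on all of `X`). -/
def muR {X : Type*} [Fintype X] (μ : X → ℝ) (R : Finset X) (x : X) : ℝ :=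
  μ x / ∑ y ∈ R, μ y

/-- Escape probability `e_R(x) = Σ_{y∉R} p(x,y)`. -/
def escR {X : Type*} [Fintype X] [DecidableEq X] (p : Matrix X X ℝ) (R : Finset X)
    (x : X) : ℝ := ∑ y ∈ Rᶜ, p x y

/-- The reflected kernel `p_R` on `R`. -/
def pRefl {X : Type*} [Fintype X] [DecidableEq X] (p : Matrix X X ℝ) (R : Finset X) :
    Matrix R R ℝ :=
  fun x y => if (x : X) = (y : X) then p x x + escR p R x else p x y

/-- The sub-Markovian killed kernel `p_R^*` on `R`. -/
def pKill {X : Type*} [Fintype X] (p : Matrix X X ℝ) (R : Finset X) : Matrix R R ℝ :=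
  fun x y => p x y

/-- Mean of `f` with respect to the weight `μ` on a finite type. -/
def meanOf {n : Type*} [Fintype n] (μ : n → ℝ) (f : n → ℝ) : ℝ := ∑ x, μ x * f x

/-- Scalar product `⟨f,g⟩` with respect to the weight `μ` on a finite type. -/
def innOf {n : Type*} [Fintype n] (μ : n → ℝ) (f g : n → ℝ) : ℝ := ∑ x, μ x * f x * g x

/-- Variance of `f` with respect to the weight `μ` on a finite type. -/
def varOf {n : Type*} [Fintype n] (μ : n → ℝ) (f : n → ℝ) : ℝ :=
  ∑ x, μ x * (f x - meanOf μ f) ^ 2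

/-- Dirichlet form of the kernel `P` reversible w.r.t. `μ`. -/
def dirOf {n : Type*} [Fintype n] (P : Matrix n n ℝ) (μ : n → ℝ) (f : n → ℝ) : ℝ :=
  (1 / 2) * ∑ x, ∑ y, μ x * P x y * (f x - f y) ^ 2

/-- Spectral gap of the kernel `P` reversible w.r.t. `μ`:
`min { D(f)/Var_μ(f) : Var_μ(f) ≠ 0 }`. -/
def gapOf {n : Type*} [Fintype n] (P : Matrix n n ℝ) (μ : n → ℝ) : ℝ :=
  sInf {r : ℝ | ∃ f : n → ℝ, varOf μ f ≠ 0 ∧ r = dirOf P μ f / varOf μ f}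

/-- Spectral gap `γ_R` of the reflected process on `R`. -/
def gapR {X : Type*} [Fintype X] [DecidableEq X] (p : Matrix X X ℝ) (μ : X → ℝ)
    (R : Finset X) : ℝ :=
  gapOf (pRefl p R) (fun x : R => muR μ R x)

/-- `(κ,∞)`-capacity `C_κ(R, X∖R)` (Dirichlet principle). -/
def capK {X : Type*} [Fintype X] [DecidableEq X] (p : Matrix X X ℝ) (μ : X → ℝ)
    (R : Finset X) (κ : ℝ) : ℝ :=
  sInf {r : ℝ | ∃ f : X → ℝ, (∀ x ∉ R, f x = 0) ∧
    r = dirOf p μ f + κ * ∑ a ∈ R, μ a * (f a - 1) ^ 2}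

/-- `(∞,λ)`-capacity `C^λ(R, X∖R)` (Dirichlet principle). -/
def capL {X : Type*} [Fintype X] [DecidableEq X] (p : Matrix X X ℝ) (μ : X → ℝ)
    (R : Finset X) (l : ℝ) : ℝ :=
  sInf {r : ℝ | ∃ f : X → ℝ, (∀ x ∈ R, f x = 1) ∧
    r = dirOf p μ f + l * ∑ b ∈ Rᶜ, μ b * f b ^ 2}

/-- `(κ,λ)`-capacity `C_κ^λ(A, B)` (Dirichlet principle). -/
def capKL {X : Type*} [Fintype X] [DecidableEq X] (p : Matrix X X ℝ) (μ : X → ℝ)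
    (A B : Finset X) (κ l : ℝ) : ℝ :=
  sInf {r : ℝ | ∃ f : X → ℝ,
    r = dirOf p μ f + κ * ∑ a ∈ A, μ a * (f a - 1) ^ 2 + l * ∑ b ∈ B, μ b * f b ^ 2}


section Helpers

variable {n : Type*} [Fintype n]

lemma dirOf_nonneg (P : Matrix n n ℝ) (μ f : n → ℝ)
    (hP : ∀ x y, 0 ≤ P x y) (hμ : ∀ x, 0 ≤ μ x) : 0 ≤ dirOf P μ f := by
  unfold dirOf
  apply mul_nonneg (by norm_num)
  refine Finset.sum_nonneg fun x _ => Finset.sum_nonneg fun y _ => ?_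
  exact mul_nonneg (mul_nonneg (hμ x) (hP x y)) (sq_nonneg _)

lemma varOf_nonneg (μ f : n → ℝ) (hμ : ∀ x, 0 ≤ μ x) : 0 ≤ varOf μ f :=
  Finset.sum_nonneg fun x _ => mul_nonneg (hμ x) (sq_nonneg _)

lemma edge_le_dirOf (P : Matrix n n ℝ) (μ f : n → ℝ)
    (hP : ∀ x y, 0 ≤ P x y) (hμ : ∀ x, 0 ≤ μ x) (x y : n) :
    μ x * P x y * (f x - f y)^2 ≤ 2 * dirOf P μ f := by
  unfold dirOf
  rw [← mul_assoc]
  norm_num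
  calc μ x * P x y * (f x - f y)^2
      ≤ ∑ y', μ x * P x y' * (f x - f y')^2 :=
        Finset.single_le_sum (f := fun y' => μ x * P x y' * (f x - f y')^2)
          (fun i _ => mul_nonneg (mul_nonneg (hμ x) (hP x i)) (sq_nonneg _))
          (Finset.mem_univ y)
    _ ≤ ∑ x', ∑ y', μ x' * P x' y' * (f x' - f y')^2 :=
        Finset.single_le_sum (f := fun x' => ∑ y', μ x' * P x' y' * (f x' - f y')^2)
          (fun i _ => Finset.sum_nonneg fun j _ =>
            mul_nonneg (mul_nonneg (hμ i) (hP i j)) (sq_nonneg _))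
          (Finset.mem_univ x)

lemma pow_entry_nonneg (P : Matrix n n ℝ) [DecidableEq n]
    (hP : ∀ x y, 0 ≤ P x y) : ∀ k x y, 0 ≤ (P ^ k) x y := by
  intro k
  induction k with
  | zero => intro x y; rw [pow_zero]; rw [Matrix.one_apply]; positivity
  | succ k ih =>
    intro x y
    rw [pow_succ, Matrix.mul_apply]
    exact Finset.sum_nonneg fun z _ => mul_nonneg (ih x z) (hP z y)

lemma path_bound (P : Matrix n n ℝ) (μ : n → ℝ) [DecidableEq n]
    (hP : ∀ x y, 0 ≤ P x y) (hμ : ∀ x, 0 < μ x) :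
    ∀ k x y, 0 < (P ^ k) x y →
      ∃ c : ℝ, 0 < c ∧ ∀ f : n → ℝ, c * (f x - f y)^2 ≤ dirOf P μ f := by
  intro k
  induction k with
  | zero =>
    intro x y h
    rw [pow_zero, Matrix.one_apply] at h
    by_cases hxy : x = y
    · subst hxy
      exact ⟨1, one_pos, fun f => by
        simpa using dirOf_nonneg P μ f hP (fun z => (hμ z).le)⟩
    · simp [hxy] at h
  | succ k ih =>
    intro x y h
    rw [pow_succ', Matrix.mul_apply] at h
    have hex : ∃ z, 0 < P x z * (P ^ k) z y := by
      by_contra hc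
      push_neg at hc
      have : ∑ z, P x z * (P ^ k) z y ≤ 0 :=
        Finset.sum_nonpos fun z _ => hc z
      linarith
    obtain ⟨z, hz⟩ := hex
    have hPxz : 0 < P x z := by
      rcases mul_pos_iff.mp hz with ⟨h1, _⟩ | ⟨h1, _⟩
      · exact h1
      · linarith [hP x z]
    have hPk : 0 < (P ^ k) z y := by
      rcases mul_pos_iff.mp hz with ⟨_, h2⟩ | ⟨h1, _⟩
      · exact h2
      · linarith [hP x z]
    obtain ⟨c, hc, hcf⟩ := ih z y hPk
    set w := μ x * P x z with hw
    have hwpos : 0 < w := mul_pos (hμ x) hPxz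
    refine ⟨min (w / 2) c / 4, by positivity, fun f => ?_⟩
    have e1 : w * (f x - f z)^2 ≤ 2 * dirOf P μ f :=
      edge_le_dirOf P μ f hP (fun u => (hμ u).le) x z
    have e2 := hcf f
    have hm1 : min (w / 2) c ≤ w / 2 := min_le_left _ _
    have hm2 : min (w / 2) c ≤ c := min_le_right _ _
    have hs1 : (0:ℝ) ≤ (f x - f z)^2 := sq_nonneg _
    have hs2 : (0:ℝ) ≤ (f z - f y)^2 := sq_nonneg _
    have hsq : (f x - f y)^2 ≤ 2 * (f x - f z)^2 + 2 * (f z - f y)^2 := by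
      nlinarith [sq_nonneg (f x - 2 * f z + f y)]
    have hm0 : (0:ℝ) ≤ min (w / 2) c := le_min (by linarith) hc.le
    have k1 : min (w / 2) c * (f x - f y)^2 ≤
        min (w / 2) c * (2 * (f x - f z)^2 + 2 * (f z - f y)^2) :=
      mul_le_mul_of_nonneg_left hsq hm0
    have k2 : min (w / 2) c * (f x - f z)^2 ≤ w / 2 * (f x - f z)^2 :=
      mul_le_mul_of_nonneg_right hm1 hs1
    have k3 : min (w / 2) c * (f z - f y)^2 ≤ c * (f z - f y)^2 :=
      mul_le_mul_of_nonneg_right hm2 hs2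
    nlinarith [k1, k2, k3]

end Helpers

section Helpers2

variable {n : Type*} [Fintype n]

lemma varOf_eq_sub (μ f : n → ℝ) (h1 : ∑ x, μ x = 1) :
    varOf μ f = (∑ x, μ x * f x ^ 2) - (meanOf μ f) ^ 2 := by
  unfold varOf
  have : ∀ x, μ x * (f x - meanOf μ f) ^ 2
      = μ x * f x ^ 2 - 2 * meanOf μ f * (μ x * f x) + (meanOf μ f)^2 * μ x := by
    intro x; ring
  rw [Finset.sum_congr rfl fun x _ => this x]
  rw [Finset.sum_add_distrib, Finset.sum_sub_distrib, ← Finset.mul_sum, ← Finset.mul_sum, h1]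
  unfold meanOf
  ring

lemma varOf_eq_double (μ f : n → ℝ) (h1 : ∑ x, μ x = 1) :
    varOf μ f = (1/2) * ∑ x, ∑ y, μ x * μ y * (f x - f y)^2 := by
  have inner : ∀ x, ∑ y, μ x * μ y * (f x - f y)^2
      = μ x * f x ^ 2 - 2 * meanOf μ f * (μ x * f x) + μ x * ∑ y, μ y * f y ^ 2 := by
    intro x
    have e : ∀ y, μ x * μ y * (f x - f y)^2
        = (μ x * f x ^ 2) * μ y - (2 * (μ x * f x)) * (μ y * f y) + μ x * (μ y * f y ^ 2) := by
      intro y; ring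
    rw [Finset.sum_congr rfl fun y _ => e y]
    rw [Finset.sum_add_distrib, Finset.sum_sub_distrib, ← Finset.mul_sum, ← Finset.mul_sum,
      ← Finset.mul_sum, h1]
    unfold meanOf
    ring
  rw [Finset.sum_congr rfl fun x _ => inner x]
  rw [Finset.sum_add_distrib, Finset.sum_sub_distrib, ← Finset.mul_sum, ← Finset.sum_mul, h1]
  rw [varOf_eq_sub μ f h1]
  unfold meanOf
  ring

lemma varOf_eq_zero_imp (μ f : n → ℝ) (hμ : ∀ x, 0 < μ x)
    (h : varOf μ f = 0) : ∀ x, f x = meanOf μ f := by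
  intro x
  have hterm : ∀ z ∈ Finset.univ, (0:ℝ) ≤ μ z * (f z - meanOf μ f)^2 :=
    fun z _ => mul_nonneg (hμ z).le (sq_nonneg _)
  have := (Finset.sum_eq_zero_iff_of_nonneg hterm).mp h x (Finset.mem_univ x)
  have h2 : (f x - meanOf μ f)^2 = 0 := by
    rcases mul_eq_zero.mp this with h' | h'
    · exact absurd h' (hμ x).ne'
    · exact h'
  have := pow_eq_zero_iff (n := 2) (by norm_num) |>.mp h2
  linarith

lemma gapOf_bounds (P : Matrix n n ℝ) (μ : n → ℝ) [DecidableEq n]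
    (hP : ∀ x y, 0 ≤ P x y) (hμ : ∀ x, 0 < μ x) (hμ1 : ∑ x, μ x = 1)
    (hirr : Irred P) (a b : n) (hab : a ≠ b) :
    0 < gapOf P μ ∧ ∀ f, gapOf P μ * varOf μ f ≤ dirOf P μ f := by
  classical
  have hpath : ∀ x y : n, ∃ c : ℝ, 0 < c ∧ ∀ f : n → ℝ, c * (f x - f y)^2 ≤ dirOf P μ f := by
    intro x y
    obtain ⟨k, hk⟩ := hirr x y
    exact path_bound P μ hP hμ k x y hk
  choose c hcpos hcle using hpath
  set K : ℝ := (1/2) * ∑ x, ∑ y, μ x * μ y / c x y with hK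
  have hne : Nonempty n := ⟨a⟩
  have hKpos : 0 < K := by
    apply mul_pos (by norm_num)
    apply Finset.sum_pos (fun x _ => Finset.sum_pos
      (fun y _ => div_pos (mul_pos (hμ x) (hμ y)) (hcpos x y)) Finset.univ_nonempty)
      Finset.univ_nonempty
  have hvarle : ∀ f, varOf μ f ≤ K * dirOf P μ f := by
    intro f
    rw [varOf_eq_double μ f hμ1, hK]
    have step : ∀ x y : n,
        μ x * μ y * (f x - f y)^2 ≤ μ x * μ y / c x y * dirOf P μ f := by
      intro x y
      rw [div_mul_eq_mul_div, le_div_iff₀ (hcpos x y)]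
      calc μ x * μ y * (f x - f y)^2 * c x y
          = μ x * μ y * (c x y * (f x - f y)^2) := by ring
        _ ≤ μ x * μ y * dirOf P μ f :=
            mul_le_mul_of_nonneg_left (hcle x y f) (mul_nonneg (hμ x).le (hμ y).le)
    calc (1/2) * ∑ x, ∑ y, μ x * μ y * (f x - f y)^2
        ≤ (1/2) * ∑ x, ∑ y, μ x * μ y / c x y * dirOf P μ f := by
          apply mul_le_mul_of_nonneg_left _ (by norm_num)
          exact Finset.sum_le_sum fun x _ => Finset.sum_le_sum fun y _ => step x y
      _ = (1/2) * ∑ x : n, (∑ y, μ x * μ y / c x y) * dirOf P μ f := by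
          simp only [Finset.sum_mul]
      _ = 1/2 * (∑ x : n, ∑ y, μ x * μ y / c x y) * dirOf P μ f := by
          rw [← Finset.sum_mul]; ring
  -- the defining set
  set S : Set ℝ := {r : ℝ | ∃ f : n → ℝ, varOf μ f ≠ 0 ∧ r = dirOf P μ f / varOf μ f} with hS
  have hSne : S.Nonempty := by
    refine ⟨_, (fun x => if x = a then (1:ℝ) else 0), ?_, rfl⟩
    intro hv
    have := varOf_eq_zero_imp μ _ hμ hv
    have ha := this a
    have hb := this b
    simp only [if_pos rfl] at ha
    simp only [if_neg (Ne.symm hab)] at hb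
    rw [← hb] at ha
    norm_num at ha
  have hlow : ∀ r ∈ S, 1 / K ≤ r := by
    rintro r ⟨f, hv, rfl⟩
    have hVpos : 0 < varOf μ f :=
      lt_of_le_of_ne (varOf_nonneg μ f fun x => (hμ x).le) (Ne.symm hv)
    rw [div_le_div_iff₀ hKpos hVpos]
    nlinarith [hvarle f]
  have hgap : 1 / K ≤ gapOf P μ := le_csInf hSne hlow
  have hgappos : 0 < gapOf P μ := lt_of_lt_of_le (by positivity) hgap
  refine ⟨hgappos, fun f => ?_⟩
  by_cases hv : varOf μ f = 0
  · rw [hv, mul_zero]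
    exact dirOf_nonneg P μ f hP fun x => (hμ x).le
  · have hVpos : 0 < varOf μ f :=
      lt_of_le_of_ne (varOf_nonneg μ f fun x => (hμ x).le) (Ne.symm hv)
    have hBdd : BddBelow S := by
      refine ⟨0, fun r hr => ?_⟩
      obtain ⟨g, hg, rfl⟩ := hr
      have : 0 < varOf μ g :=
        lt_of_le_of_ne (varOf_nonneg μ g fun x => (hμ x).le) (Ne.symm hg)
      exact div_nonneg (dirOf_nonneg P μ g hP fun x => (hμ x).le) this.le
    have hmem : dirOf P μ f / varOf μ f ∈ S := ⟨f, hv, rfl⟩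
    have := csInf_le hBdd hmem
    calc gapOf P μ * varOf μ f ≤ (dirOf P μ f / varOf μ f) * varOf μ f :=
          mul_le_mul_of_nonneg_right this hVpos.le
      _ = dirOf P μ f := div_mul_cancel₀ _ hVpos.ne'

end Helpers2

section Restrict

variable {X : Type*} [Fintype X] [DecidableEq X]

lemma restrict_sum (μ : X → ℝ) (R : Finset X) (g : X → ℝ)
    (hα : (∑ y ∈ R, μ y) ≠ 0) :
    (∑ y ∈ R, μ y) * (∑ x : R, muR μ R ↑x * g ↑x) = ∑ x ∈ R, μ x * g x := by
  rw [Finset.sum_coe_sort R (fun x => muR μ R x * g x), Finset.mul_sum]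
  refine Finset.sum_congr rfl fun x _ => ?_
  unfold muR
  field_simp

lemma muR_sum_one (μ : X → ℝ) (R : Finset X) (hα : (∑ y ∈ R, μ y) ≠ 0) :
    ∑ x : R, muR μ R ↑x = 1 := by
  rw [Finset.sum_coe_sort R (fun x => muR μ R x)]
  unfold muR
  rw [← Finset.sum_div, div_self hα]

lemma restrict_dir (p : Matrix X X ℝ) (μ : X → ℝ) (R : Finset X) (f : X → ℝ)
    (hα : (∑ y ∈ R, μ y) ≠ 0) :
    (∑ y ∈ R, μ y) * dirOf (pRefl p R) (fun x : R => muR μ R ↑x) (fun x : R => f ↑x)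
      = (1/2) * ∑ x ∈ R, ∑ y ∈ R, μ x * p x y * (f x - f y)^2 := by
  unfold dirOf
  have e : ∀ x : R, ∀ y : R, muR μ R ↑x * pRefl p R x y * (f ↑x - f ↑y)^2
      = muR μ R ↑x * p ↑x ↑y * (f ↑x - f ↑y)^2 := by
    intro x y
    by_cases h : (x : X) = (y : X)
    · simp [pRefl, h]
    · simp [pRefl, h]
  rw [Finset.sum_congr rfl fun x _ => Finset.sum_congr rfl fun y _ => e x y]
  have e2 : ∑ x : R, ∑ y : R, muR μ R ↑x * p ↑x ↑y * (f ↑x - f ↑y)^2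
      = ∑ x ∈ R, ∑ y ∈ R, muR μ R x * p x y * (f x - f y)^2 := by
    rw [Finset.sum_coe_sort R (fun x => ∑ y : R, muR μ R x * p x ↑y * (f x - f ↑y)^2)]
    exact Finset.sum_congr rfl fun x _ =>
      Finset.sum_coe_sort R (fun y => muR μ R x * p x y * (f x - f y)^2)
  rw [e2]
  have e3 : (∑ y ∈ R, μ y) * ∑ x ∈ R, ∑ y ∈ R, muR μ R x * p x y * (f x - f y)^2
      = ∑ x ∈ R, ∑ y ∈ R, μ x * p x y * (f x - f y)^2 := by
    rw [Finset.mul_sum]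
    refine Finset.sum_congr rfl fun x hx => ?_
    rw [Finset.mul_sum]
    refine Finset.sum_congr rfl fun y hy => ?_
    unfold muR
    field_simp
  linear_combination (1/2 : ℝ) * e3

lemma dir_split (p : Matrix X X ℝ) (μ : X → ℝ) (f : X → ℝ) (R : Finset X)
    (hp : ∀ x y, 0 ≤ p x y) (hμ : ∀ x, 0 ≤ μ x) :
    (1/2) * (∑ x ∈ R, ∑ y ∈ R, μ x * p x y * (f x - f y)^2)
      + (1/2) * (∑ x ∈ Rᶜ, ∑ y ∈ Rᶜ, μ x * p x y * (f x - f y)^2) ≤ dirOf p μ f := by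
  unfold dirOf
  have key : ∀ (s : Finset X) (x : X),
      ∑ y ∈ s, μ x * p x y * (f x - f y)^2 ≤ ∑ y, μ x * p x y * (f x - f y)^2 :=
    fun s x => Finset.sum_le_sum_of_subset_of_nonneg (Finset.subset_univ s)
      (fun y _ _ => mul_nonneg (mul_nonneg (hμ x) (hp x y)) (sq_nonneg _))
  calc (1/2) * (∑ x ∈ R, ∑ y ∈ R, μ x * p x y * (f x - f y)^2)
        + (1/2) * (∑ x ∈ Rᶜ, ∑ y ∈ Rᶜ, μ x * p x y * (f x - f y)^2)
      ≤ (1/2) * (∑ x ∈ R, ∑ y, μ x * p x y * (f x - f y)^2)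
        + (1/2) * (∑ x ∈ Rᶜ, ∑ y, μ x * p x y * (f x - f y)^2) := by
        have h1 : ∑ x ∈ R, ∑ y ∈ R, μ x * p x y * (f x - f y)^2
            ≤ ∑ x ∈ R, ∑ y, μ x * p x y * (f x - f y)^2 :=
          Finset.sum_le_sum fun x _ => key R x
        have h2 : ∑ x ∈ Rᶜ, ∑ y ∈ Rᶜ, μ x * p x y * (f x - f y)^2
            ≤ ∑ x ∈ Rᶜ, ∑ y, μ x * p x y * (f x - f y)^2 :=
          Finset.sum_le_sum fun x _ => key Rᶜ x
        linarith
    _ = (1/2) * ∑ x, ∑ y, μ x * p x y * (f x - f y)^2 := by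
        rw [← mul_add, Finset.sum_add_sum_compl]

end Restrict
/-- Theorem 2.10, upper bound: a new Poincaré inequality for the relaxation time `1/γ`. -/
theorem relaxation_time_upper_bound
    (X : Type*) [Fintype X] [DecidableEq X]
    (p : Matrix X X ℝ) (μ : X → ℝ) (R : Finset X)
    (hp_nonneg : ∀ x y, 0 ≤ p x y)
    (hp_row : ∀ x, ∑ y, p x y = 1)
    (hp_irr : Irred p)
    (hμ_pos : ∀ x, 0 < μ x)
    (hμ_sum : ∑ x, μ x = 1)
    (hrev : ∀ x y, μ x * p x y = μ y * p y x)
    (hR_ne : R.Nonempty) (hR_proper : R ≠ Finset.univ)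
    (hR_two : 2 ≤ R.card)
    (hpR_irr : Irred (pRefl p R))
    (hRc_two : 2 ≤ Rᶜ.card)
    (hpRc_irr : Irred (pRefl p Rᶜ))
    (κ l : ℝ) (hκ : 0 < κ) (hl : 0 < l) :
    1 / gapOf p μ ≤
      (1 / (capKL p μ R Rᶜ κ l / ((∑ y ∈ R, μ y) * ∑ y ∈ Rᶜ, μ y))) *
        (1 + max
          ((κ + capKL p μ R Rᶜ κ l / ((∑ y ∈ R, μ y) * ∑ y ∈ Rᶜ, μ y)) / gapR p μ R)
          ((l + capKL p μ R Rᶜ κ l / ((∑ y ∈ R, μ y) * ∑ y ∈ Rᶜ, μ y)) / gapR p μ Rᶜ)) := by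
  classical
  set α := ∑ y ∈ R, μ y with hα
  set β := ∑ y ∈ Rᶜ, μ y with hβ
  set C := capKL p μ R Rᶜ κ l with hC
  obtain ⟨a0, ha0⟩ := hR_ne
  have hRc_ne : Rᶜ.Nonempty := Finset.card_pos.mp (by omega)
  obtain ⟨b0, hb0⟩ := hRc_ne
  have hb0' : b0 ∉ R := Finset.mem_compl.mp hb0
  have hab0 : a0 ≠ b0 := fun h => hb0' (h ▸ ha0)
  have hαpos : 0 < α := Finset.sum_pos (fun x _ => hμ_pos x) ⟨a0, ha0⟩
  have hβpos : 0 < β := Finset.sum_pos (fun x _ => hμ_pos x) ⟨b0, hb0⟩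
  have hαβ : α + β = 1 := by rw [hα, hβ, Finset.sum_add_sum_compl]; exact hμ_sum
  have hμnn : ∀ x, 0 ≤ μ x := fun x => (hμ_pos x).le
  -- positivity of the capacity
  obtain ⟨k0, hk0⟩ := hp_irr a0 b0
  obtain ⟨c0, hc0pos, hc0⟩ := path_bound p μ hp_nonneg hμ_pos k0 a0 b0 hk0
  have hCpos : 0 < C := by
    rw [hC]
    unfold capKL
    have hne : {r : ℝ | ∃ f : X → ℝ, r = dirOf p μ f + κ * ∑ a ∈ R, μ a * (f a - 1) ^ 2
        + l * ∑ b ∈ Rᶜ, μ b * f b ^ 2}.Nonempty := ⟨_, (fun _ => (0:ℝ)), rfl⟩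
    have hδpos : (0:ℝ) < min c0 (min (κ * μ a0) (l * μ b0)) / 3 :=
      div_pos (lt_min hc0pos (lt_min (mul_pos hκ (hμ_pos a0)) (mul_pos hl (hμ_pos b0))))
        (by norm_num)
    refine lt_of_lt_of_le hδpos (le_csInf hne ?_)
    rintro r ⟨f, rfl⟩
    have h1 : c0 * (f a0 - f b0)^2 ≤ dirOf p μ f := hc0 f
    have hsumR : μ a0 * (f a0 - 1)^2 ≤ ∑ a ∈ R, μ a * (f a - 1)^2 :=
      Finset.single_le_sum (f := fun i => μ i * (f i - 1)^2)
        (fun i _ => mul_nonneg (hμnn i) (sq_nonneg _)) ha0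
    have hsumB : μ b0 * (f b0)^2 ≤ ∑ b ∈ Rᶜ, μ b * f b ^ 2 :=
      Finset.single_le_sum (f := fun i => μ i * (f i)^2)
        (fun i _ => mul_nonneg (hμnn i) (sq_nonneg _)) hb0
    set m := min c0 (min (κ * μ a0) (l * μ b0)) with hm
    have hm0 : 0 < m := lt_min hc0pos (lt_min (mul_pos hκ (hμ_pos a0)) (mul_pos hl (hμ_pos b0)))
    have hquad : (1:ℝ)/3 ≤ (f a0 - f b0)^2 + (f a0 - 1)^2 + (f b0)^2 := by
      nlinarith [sq_nonneg (f a0 - f b0 - (1 - f a0)), sq_nonneg (f a0 - f b0 - f b0),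
        sq_nonneg (1 - f a0 - f b0)]
    have k1 : m * (f a0 - f b0)^2 ≤ c0 * (f a0 - f b0)^2 :=
      mul_le_mul_of_nonneg_right (min_le_left _ _) (sq_nonneg _)
    have k2 : m * (f a0 - 1)^2 ≤ κ * μ a0 * (f a0 - 1)^2 :=
      mul_le_mul_of_nonneg_right (le_trans (min_le_right _ _) (min_le_left _ _)) (sq_nonneg _)
    have k3 : m * (f b0)^2 ≤ l * μ b0 * (f b0)^2 :=
      mul_le_mul_of_nonneg_right (le_trans (min_le_right _ _) (min_le_right _ _)) (sq_nonneg _)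
    have k4 : κ * (μ a0 * (f a0 - 1)^2) ≤ κ * ∑ a ∈ R, μ a * (f a - 1)^2 :=
      mul_le_mul_of_nonneg_left hsumR hκ.le
    have k5 : l * (μ b0 * (f b0)^2) ≤ l * ∑ b ∈ Rᶜ, μ b * f b ^ 2 :=
      mul_le_mul_of_nonneg_left hsumB hl.le
    have k6 : m * (1/3) ≤ m * ((f a0 - f b0)^2 + (f a0 - 1)^2 + (f b0)^2) :=
      mul_le_mul_of_nonneg_left hquad hm0.le
    linarith
  -- gaps of the reflected chains
  have hpRnn : ∀ (s : Finset X) (x y : s), 0 ≤ pRefl p s x y := by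
    intro s x y
    unfold pRefl escR
    split
    · exact add_nonneg (hp_nonneg _ _) (Finset.sum_nonneg fun z _ => hp_nonneg _ _)
    · exact hp_nonneg _ _
  obtain ⟨a1, ha1, b1, hb1, hne1⟩ := Finset.one_lt_card.mp (by omega : 1 < R.card)
  obtain ⟨a2, ha2, b2, hb2, hne2⟩ := Finset.one_lt_card.mp (by omega : 1 < Rᶜ.card)
  have hμR_pos : ∀ x : R, 0 < muR μ R ↑x := fun x => div_pos (hμ_pos ↑x) hαpos
  have hμB_pos : ∀ x : ↥(Rᶜ), 0 < muR μ Rᶜ ↑x := fun x => div_pos (hμ_pos ↑x) hβpos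
  obtain ⟨hγRpos, hγRle⟩ := gapOf_bounds (pRefl p R) (fun x : R => muR μ R ↑x)
    (hpRnn R) hμR_pos (muR_sum_one μ R hαpos.ne') hpR_irr ⟨a1, ha1⟩ ⟨b1, hb1⟩
    (fun h => hne1 (congrArg Subtype.val h))
  obtain ⟨hγBpos, hγBle⟩ := gapOf_bounds (pRefl p Rᶜ) (fun x : ↥(Rᶜ) => muR μ Rᶜ ↑x)
    (hpRnn Rᶜ) hμB_pos (muR_sum_one μ Rᶜ hβpos.ne') hpRc_irr ⟨a2, ha2⟩ ⟨b2, hb2⟩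
    (fun h => hne2 (congrArg Subtype.val h))
  have eγR : gapR p μ R = gapOf (pRefl p R) (fun x : R => muR μ R ↑x) := rfl
  have eγB : gapR p μ Rᶜ = gapOf (pRefl p Rᶜ) (fun x : ↥(Rᶜ) => muR μ Rᶜ ↑x) := rfl
  rw [eγR, eγB]
  set γR := gapOf (pRefl p R) (fun x : R => muR μ R ↑x) with hγR
  set γB := gapOf (pRefl p Rᶜ) (fun x : ↥(Rᶜ) => muR μ Rᶜ ↑x) with hγB
  set φ := C / (α * β) with hφ
  have hφpos : 0 < φ := div_pos hCpos (mul_pos hαpos hβpos)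
  set M := max ((κ + φ) / γR) ((l + φ) / γB) with hM
  have hMpos : 0 < M :=
    lt_of_lt_of_le (div_pos (by linarith) hγRpos) (le_max_left _ _)
  have h1M : 0 < 1 + M := by linarith
  have hMR : κ + φ ≤ M * γR := by
    have := le_max_left ((κ + φ) / γR) ((l + φ) / γB)
    rw [div_le_iff₀ hγRpos] at this
    linarith
  have hMB : l + φ ≤ M * γB := by
    have := le_max_right ((κ + φ) / γR) ((l + φ) / γB)
    rw [div_le_iff₀ hγBpos] at this
    linarith
  -- expansion of restricted second moments
  have expand : ∀ (s : Finset X) (f : X → ℝ) (t : ℝ), ∑ x ∈ s, μ x * (f x - t)^2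
      = (∑ x ∈ s, μ x * f x^2) - 2*t*(∑ x ∈ s, μ x * f x) + t^2 * (∑ x ∈ s, μ x) := by
    intro s f t
    have e : ∀ x, μ x * (f x - t)^2 = μ x * f x^2 - 2*t*(μ x * f x) + t^2 * μ x :=
      fun x => by ring
    rw [Finset.sum_congr rfl fun x _ => e x, Finset.sum_add_distrib, Finset.sum_sub_distrib,
      ← Finset.mul_sum, ← Finset.mul_sum]
  -- the key lower bound on every element of the spectral-gap set
  have claim : ∀ r ∈ {r : ℝ | ∃ f : X → ℝ, varOf μ f ≠ 0 ∧ r = dirOf p μ f / varOf μ f},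
      φ / (1 + M) ≤ r := by
    rintro r ⟨f, hv, rfl⟩
    have hVpos : 0 < varOf μ f := lt_of_le_of_ne (varOf_nonneg μ f hμnn) (Ne.symm hv)
    set mR := meanOf (fun x : R => muR μ R ↑x) (fun x : R => f ↑x) with hmR
    set mB := meanOf (fun x : ↥(Rᶜ) => muR μ Rᶜ ↑x) (fun x : ↥(Rᶜ) => f ↑x) with hmB
    set VR := varOf (fun x : R => muR μ R ↑x) (fun x : R => f ↑x) with hVR
    set VB := varOf (fun x : ↥(Rᶜ) => muR μ Rᶜ ↑x) (fun x : ↥(Rᶜ) => f ↑x) with hVB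
    set DR := dirOf (pRefl p R) (fun x : R => muR μ R ↑x) (fun x : R => f ↑x) with hDR
    set DB := dirOf (pRefl p Rᶜ) (fun x : ↥(Rᶜ) => muR μ Rᶜ ↑x) (fun x : ↥(Rᶜ) => f ↑x) with hDB
    have hVRnn : 0 ≤ VR := varOf_nonneg _ _ (fun x => (hμR_pos x).le)
    have hVBnn : 0 ≤ VB := varOf_nonneg _ _ (fun x => (hμB_pos x).le)
    have eSR : α * mR = ∑ x ∈ R, μ x * f x := restrict_sum μ R f hαpos.ne'
    have eSB : β * mB = ∑ x ∈ Rᶜ, μ x * f x := restrict_sum μ Rᶜ f hβpos.ne'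
    have eVR : α * VR = ∑ x ∈ R, μ x * (f x - mR)^2 :=
      restrict_sum μ R (fun x => (f x - mR)^2) hαpos.ne'
    have eVB : β * VB = ∑ x ∈ Rᶜ, μ x * (f x - mB)^2 :=
      restrict_sum μ Rᶜ (fun x => (f x - mB)^2) hβpos.ne'
    have em : meanOf μ f = α * mR + β * mB := by
      rw [eSR, eSB, Finset.sum_add_sum_compl]
      rfl
    have eαVR : α * VR = (∑ x ∈ R, μ x * f x^2) - α * mR^2 := by
      rw [eVR, expand R f mR, ← eSR, ← hα]
      ring
    have eβVB : β * VB = (∑ x ∈ Rᶜ, μ x * f x^2) - β * mB^2 := by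
      rw [eVB, expand Rᶜ f mB, ← eSB, ← hβ]
      ring
    have eVar : varOf μ f = ((∑ x ∈ R, μ x * f x^2) + ∑ x ∈ Rᶜ, μ x * f x^2)
        - (α * mR + β * mB)^2 := by
      rw [varOf_eq_sub μ f hμ_sum, em, Finset.sum_add_sum_compl]
    have decomp : varOf μ f = α * VR + β * VB + α * β * (mR - mB)^2 := by
      linear_combination eVar - eαVR - eβVB - (α * mR^2 + β * mB^2) * hαβ
    -- Dirichlet splitting
    have eDR : α * DR = (1/2) * ∑ x ∈ R, ∑ y ∈ R, μ x * p x y * (f x - f y)^2 :=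
      restrict_dir p μ R f hαpos.ne'
    have eDB : β * DB = (1/2) * ∑ x ∈ Rᶜ, ∑ y ∈ Rᶜ, μ x * p x y * (f x - f y)^2 :=
      restrict_dir p μ Rᶜ f hβpos.ne'
    have hDsum : α * DR + β * DB ≤ dirOf p μ f := by
      rw [eDR, eDB]
      exact dir_split p μ f R hp_nonneg hμnn
    -- gap bounds for the restricted variances
    have hgR : γR * VR ≤ DR := hγRle _
    have hgB : γB * VB ≤ DB := hγBle _
    have hD : 0 ≤ dirOf p μ f := dirOf_nonneg p μ f hp_nonneg hμnn
    -- capacity bound on the cross term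
    have hcap : φ * (α * β * (mR - mB)^2) ≤ dirOf p μ f + κ * (α * VR) + l * (β * VB) := by
      have hφC : φ * (α * β) = C := div_mul_cancel₀ _ (mul_pos hαpos hβpos).ne'
      by_cases hΔ : mR - mB = 0
      · rw [hΔ]
        have : φ * (α * β * 0^2) = 0 := by ring
        rw [this]
        have h2 : 0 ≤ κ * (α * VR) := mul_nonneg hκ.le (mul_nonneg hαpos.le hVRnn)
        have h3 : 0 ≤ l * (β * VB) := mul_nonneg hl.le (mul_nonneg hβpos.le hVBnn)
        linarith
      · have hΔ2 : (0:ℝ) < (mR - mB)^2 :=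
          lt_of_le_of_ne (sq_nonneg _) (Ne.symm (pow_ne_zero 2 hΔ))
        set g : X → ℝ := fun x => (f x - mB) / (mR - mB) with hg
        have hBdd : BddBelow {r : ℝ | ∃ f : X → ℝ,
            r = dirOf p μ f + κ * ∑ a ∈ R, μ a * (f a - 1) ^ 2
              + l * ∑ b ∈ Rᶜ, μ b * f b ^ 2} := by
          refine ⟨0, ?_⟩
          rintro r ⟨h, rfl⟩
          have d1 : 0 ≤ dirOf p μ h := dirOf_nonneg p μ h hp_nonneg hμnn
          have d2 : 0 ≤ ∑ a ∈ R, μ a * (h a - 1)^2 :=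
            Finset.sum_nonneg fun i _ => mul_nonneg (hμnn i) (sq_nonneg _)
          have d3 : 0 ≤ ∑ b ∈ Rᶜ, μ b * h b ^ 2 :=
            Finset.sum_nonneg fun i _ => mul_nonneg (hμnn i) (sq_nonneg _)
          have := mul_nonneg hκ.le d2
          have := mul_nonneg hl.le d3
          linarith
        have hmem : dirOf p μ g + κ * ∑ a ∈ R, μ a * (g a - 1) ^ 2
            + l * ∑ b ∈ Rᶜ, μ b * g b ^ 2 ∈ {r : ℝ | ∃ f : X → ℝ,
            r = dirOf p μ f + κ * ∑ a ∈ R, μ a * (f a - 1) ^ 2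
              + l * ∑ b ∈ Rᶜ, μ b * f b ^ 2} := ⟨g, rfl⟩
        have hCle : C ≤ dirOf p μ g + κ * ∑ a ∈ R, μ a * (g a - 1) ^ 2
            + l * ∑ b ∈ Rᶜ, μ b * g b ^ 2 := by
          rw [hC]
          unfold capKL
          exact csInf_le hBdd hmem
        have eg1 : dirOf p μ g = dirOf p μ f / (mR - mB)^2 := by
          unfold dirOf
          have e : ∀ x y, μ x * p x y * (g x - g y)^2
              = μ x * p x y * (f x - f y)^2 / (mR - mB)^2 := by
            intro x y
            simp only [hg]
            field_simp; ring
          rw [Finset.sum_congr rfl fun x _ => Finset.sum_congr rfl fun y _ => e x y]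
          simp only [← Finset.sum_div]
          ring
        have eg2 : ∑ a ∈ R, μ a * (g a - 1) ^ 2 = (α * VR) / (mR - mB)^2 := by
          have e : ∀ a, μ a * (g a - 1)^2 = μ a * (f a - mR)^2 / (mR - mB)^2 := by
            intro a
            simp only [hg]
            field_simp; ring
          rw [Finset.sum_congr rfl fun a _ => e a, ← Finset.sum_div, ← eVR]
        have eg3 : ∑ b ∈ Rᶜ, μ b * g b ^ 2 = (β * VB) / (mR - mB)^2 := by
          have e : ∀ b, μ b * (g b)^2 = μ b * (f b - mB)^2 / (mR - mB)^2 := by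
            intro b
            simp only [hg]
            field_simp
          rw [Finset.sum_congr rfl fun b _ => e b, ← Finset.sum_div, ← eVB]
        rw [eg1, eg2, eg3] at hCle
        have hmul : C * (mR - mB)^2 ≤ dirOf p μ f + κ * (α * VR) + l * (β * VB) := by
          have h5 := mul_le_mul_of_nonneg_right hCle hΔ2.le
          have e4 : (dirOf p μ f / (mR - mB)^2 + κ * ((α * VR) / (mR - mB)^2) + l * ((β * VB) / (mR - mB)^2)) * (mR - mB)^2
              = dirOf p μ f + κ * (α * VR) + l * (β * VB) := by
            field_simp
          rw [e4] at h5
          exact h5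
        calc φ * (α * β * (mR - mB)^2) = C * (mR - mB)^2 := by rw [← hφC]; ring
          _ ≤ _ := hmul
    -- combine everything
    rw [div_le_div_iff₀ h1M hVpos]
    have A' : φ * varOf μ f
        = φ * (α * VR) + φ * (β * VB) + φ * (α * β * (mR - mB)^2) := by
      rw [decomp]; ring
    have chainR : (φ + κ) * (α * VR) ≤ (M * α) * DR := by
      calc (φ + κ) * (α * VR) ≤ (M * γR) * (α * VR) :=
            mul_le_mul_of_nonneg_right (by linarith) (mul_nonneg hαpos.le hVRnn)
        _ = (M * α) * (γR * VR) := by ring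
        _ ≤ (M * α) * DR :=
            mul_le_mul_of_nonneg_left hgR (mul_nonneg hMpos.le hαpos.le)
    have chainB : (φ + l) * (β * VB) ≤ (M * β) * DB := by
      calc (φ + l) * (β * VB) ≤ (M * γB) * (β * VB) :=
            mul_le_mul_of_nonneg_right (by linarith) (mul_nonneg hβpos.le hVBnn)
        _ = (M * β) * (γB * VB) := by ring
        _ ≤ (M * β) * DB :=
            mul_le_mul_of_nonneg_left hgB (mul_nonneg hMpos.le hβpos.le)
    have hMD : M * (α * DR) + M * (β * DB) ≤ M * dirOf p μ f := by
      have := mul_le_mul_of_nonneg_left hDsum hMpos.le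
      linarith [mul_le_mul_of_nonneg_left hDsum hMpos.le]
    linarith [A', hcap, chainR, chainB, hMD]
  -- conclude
  have hSne : {r : ℝ | ∃ f : X → ℝ, varOf μ f ≠ 0 ∧ r = dirOf p μ f / varOf μ f}.Nonempty := by
    refine ⟨_, (fun x => if x = a0 then (1:ℝ) else 0), ?_, rfl⟩
    intro hv
    have := varOf_eq_zero_imp μ _ hμ_pos hv
    have ha := this a0
    have hb := this b0
    simp only [if_pos rfl] at ha
    simp only [if_neg (Ne.symm hab0)] at hb
    rw [← hb] at ha
    norm_num at ha
  have hγlow : φ / (1 + M) ≤ gapOf p μ := le_csInf hSne claim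
  have hstep : 1 / gapOf p μ ≤ 1 / (φ / (1 + M)) :=
    one_div_le_one_div_of_le (div_pos hφpos h1M) hγlow
  calc 1 / gapOf p μ ≤ 1 / (φ / (1 + M)) := hstep
    _ = (1 + M) / φ := one_div_div _ _
    _ = (1 / φ) * (1 + M) := (one_div_mul_eq_div φ (1 + M)).symm
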